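/- Let A be an algebra of dimension n (with constants e₁,...,eₙ and (n+1)-ary operation q satisfying q(eᵢ,x₁,...,xₙ)=xᵢ). The set of n-central elements of A is closed under q and contains e₁,...,eₙ; hence it forms a subalgebra of the pure reduct (A, q, e₁,...,eₙ). -/
import Mathlib


/-- An algebraic signature: a type of operation symbols with arities. -/
structure Signature where
  ops : Type
  ar : ops → ℕ

/-- An algebra of dimension `n`: constants `e₁,…,eₙ` and an `(n+1)`-ary operation `q`
satisfying `q(eᵢ,x₁,…,xₙ) = xᵢ`, besides the basic operations of the signature. -/
structure NDA (S : Signature) (n : ℕ) where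
  A : Type
  op : ∀ o : S.ops, (Fin (S.ar o) → A) → A
  e : Fin n → A
  q : A → (Fin n → A) → A
  q_e : ∀ (i : Fin n) (x : Fin n → A), q (e i) x = x i

/-- `c` is an `n`-central element: (B1) `q(c,e₁,…,eₙ) = c`; (B2) `q(c,x,…,x) = x`;
(B3) `q(c,-)` commutes with every basic operation and with `q` itself. -/
def NDA.IsCentral {S : Signature} {n : ℕ} (B : NDA S n) (c : B.A) : Prop :=
  B.q c B.e = c ∧
  (∀ x : B.A, B.q c (fun _ => x) = x) ∧
  (∀ (o : S.ops) (m : Fin n → Fin (S.ar o) → B.A),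
    B.q c (fun i => B.op o (m i)) = B.op o (fun j => B.q c (fun i => m i j))) ∧
  (∀ (a : Fin n → B.A) (m : Fin n → Fin n → B.A),
    B.q c (fun i => B.q (a i) (m i)) = B.q (B.q c a) (fun j => B.q c (fun i => m i j)))

/-- The set of `n`-central elements of an algebra of dimension `n` contains
`e₁,…,eₙ` and is closed under `q`; hence it is a subalgebra of the pure reduct
`(A, q, e₁,…,eₙ)`. -/
theorem central_elements_subalgebra {S : Signature} {n : ℕ} (B : NDA S n) :
    (∀ i : Fin n, B.IsCentral (B.e i)) ∧
    (∀ (a : B.A) (c : Fin n → B.A),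
      B.IsCentral a → (∀ i, B.IsCentral (c i)) → B.IsCentral (B.q a c)) := by
  constructor
  · intro i
    refine ⟨B.q_e i B.e, fun x => B.q_e i _, fun o m => ?_, fun a m => ?_⟩
    · simp [B.q_e]
    · simp [B.q_e]
  · intro a c ⟨ha1, ha2, ha3, ha4⟩ hc
    have key : ∀ y : Fin n → B.A, B.q (B.q a c) y = B.q a (fun i => B.q (c i) y) := by
      intro y
      have := ha4 c (fun _ => y)
      rw [this]
      congr 1
      funext j
      exact (ha2 (y j)).symm
    have hB1 : B.q (B.q a c) B.e = B.q a c := by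
      rw [key]
      congr 1
      funext i
      exact (hc i).1
    have hB2 : ∀ x : B.A, B.q (B.q a c) (fun _ => x) = x := by
      intro x
      rw [key]
      have : (fun i => B.q (c i) (fun _ => x)) = fun _ : Fin n => x := by
        funext i; exact (hc i).2.1 x
      rw [this]
      exact ha2 x
    refine ⟨hB1, hB2, fun o m => ?_, fun b m => ?_⟩
    · rw [key]
      have h1 : (fun i' => B.q (c i') (fun i => B.op o (m i)))
          = fun i' => B.op o (fun j => B.q (c i') (fun i => m i j)) := by
        funext i'; exact (hc i').2.2.1 o m
      rw [h1, ha3 o (fun i' j => B.q (c i') (fun i => m i j))]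
      congr 1
      funext j
      rw [key]
    · rw [key]
      have h1 : (fun i' => B.q (c i') (fun i => B.q (b i) (m i)))
          = fun i' => B.q (B.q (c i') b) (fun j => B.q (c i') (fun i => m i j)) := by
        funext i'; exact (hc i').2.2.2 b m
      rw [h1, ha4 (fun i' => B.q (c i') b) (fun i' j => B.q (c i') (fun i => m i j))]
      rw [← key]
      congr 1
      funext j
      rw [key]
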